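/- Fix φ > 0 and λ̄ > 0, λ̄₀ > 0. Let N : ℝ → ℝ and Λ₀ : ℝ → ℝ be functions with N(t) ≥ 0 and Λ₀(t) ≥ 0 for all t > 0, N(t)/t → λ̄ and Λ₀(t)/t → λ̄₀ as t → ∞. Define, for t > 0, log M(t) = φ log φ − (φ + N(t)) log(φ + Λ₀(t)) + Λ₀(t) + log Γ(φ + N(t)) − log Γ(φ). Then (log M(t))/t → λ̄ log(λ̄/λ̄₀) − (λ̄ − λ̄₀) as t → ∞. -/

import Mathlib

open Real Filter

noncomputable def gfun (x : ℝ) : ℝ := x * Real.log x - x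

lemma gfun_gap_lower {y x : ℝ} (hy : 1 ≤ y) (hxy : y ≤ x) :
    (x - y) * Real.log y ≤ gfun x - gfun y := by
  have hy0 : (0:ℝ) < y := lt_of_lt_of_le one_pos hy
  have hx0 : (0:ℝ) < x := lt_of_lt_of_le hy0 hxy
  have h1 : Real.log (y / x) ≤ y / x - 1 := Real.log_le_sub_one_of_pos (by positivity)
  have h2 : Real.log (y / x) = Real.log y - Real.log x := Real.log_div (ne_of_gt hy0) (ne_of_gt hx0)
  -- x * (log x - log y) ≥ x - y
  have h3 : x - y ≤ x * (Real.log x - Real.log y) := by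
    have := h1
    rw [h2] at this
    have := mul_le_mul_of_nonneg_left this (le_of_lt hx0)
    have hxy' : x * (y / x - 1) = y - x := by field_simp
    nlinarith [this]
  simp only [gfun]
  nlinarith [h3]

lemma gfun_gap_upper {y x : ℝ} (hy : 1 ≤ y) (hxy : y ≤ x) :
    gfun x - gfun y ≤ (x - y) * Real.log x := by
  have hy0 : (0:ℝ) < y := lt_of_lt_of_le one_pos hy
  have hx0 : (0:ℝ) < x := lt_of_lt_of_le hy0 hxy
  have h1 : Real.log (y / x) ≤ y / x - 1 := Real.log_le_sub_one_of_pos (by positivity)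
  have h2 : Real.log (y / x) = Real.log y - Real.log x := Real.log_div (ne_of_gt hy0) (ne_of_gt hx0)
  -- y * (log y - log x) ≥ y - x
  have h3 : y - x ≤ y * (Real.log y - Real.log x) := by
    rw [h2] at h1
    have := mul_le_mul_of_nonneg_left h1 (le_of_lt hy0)
    have hxy' : y * (y / x - 1) ≤ y - x → True := fun _ => trivial
    have key : y * (y / x - 1) = y * y / x - y := by ring
    -- use log(x/y) ≤ x/y - 1 instead
    have h4 : Real.log (x / y) ≤ x / y - 1 := Real.log_le_sub_one_of_pos (by positivity)
    have h5 : Real.log (x / y) = Real.log x - Real.log y :=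
      Real.log_div (ne_of_gt hx0) (ne_of_gt hy0)
    rw [h5] at h4
    have := mul_le_mul_of_nonneg_left h4 (le_of_lt hy0)
    have h6 : y * (x / y - 1) = x - y := by field_simp
    nlinarith [this]
  simp only [gfun]
  nlinarith [h3]

lemma gfun_mono {y x : ℝ} (hy : 1 ≤ y) (hxy : y ≤ x) : gfun y ≤ gfun x := by
  have := gfun_gap_lower hy hxy
  have hlog : 0 ≤ Real.log y := Real.log_nonneg hy
  nlinarith

/-- Stirling-type bound: `|log n! - gfun n| ≤ C + log (2 n)` for `n ≥ 1`. -/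
lemma log_factorial_bound : ∃ C : ℝ, 0 ≤ C ∧ ∀ n : ℕ, 1 ≤ n →
    |Real.log ((Nat.factorial n : ℕ) : ℝ) - gfun n| ≤ C + Real.log (2 * n) := by
  obtain ⟨c, hc⟩ : ∃ c : ℝ, ∀ n : ℕ, c ≤ Real.log (Stirling.stirlingSeq (n + 1)) :=
    ⟨_, Stirling.log_stirlingSeq_bounded_by_constant⟩
  refine ⟨|c| + |Real.log (Stirling.stirlingSeq 1)|, by positivity, fun n hn => ?_⟩
  obtain ⟨m, rfl⟩ := Nat.exists_eq_add_of_le hn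
  set n := 1 + m with hndef
  have hform := Stirling.log_stirlingSeq_formula n
  have hn0 : (0:ℝ) < n := by positivity
  have hlogdiv : (n:ℝ) * Real.log ((n:ℝ) / Real.exp 1) = (n:ℝ) * Real.log n - n := by
    rw [Real.log_div (ne_of_gt hn0) (Real.exp_ne_zero 1), Real.log_exp]; ring
  have key : Real.log ((Nat.factorial n : ℕ) : ℝ) - gfun n
      = Real.log (Stirling.stirlingSeq n) + 1 / 2 * Real.log (2 * n) := by
    simp only [gfun]
    rw [hform, hlogdiv]; ring
  rw [key]
  have h2n : (1:ℝ) ≤ 2 * n := by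
    have : (1:ℝ) ≤ (n:ℝ) := by exact_mod_cast hn
    linarith
  have hlog2n : 0 ≤ Real.log (2 * n) := Real.log_nonneg h2n
  have hlow : c ≤ Real.log (Stirling.stirlingSeq n) := by
    have := hc m; rwa [hndef, Nat.add_comm]
  have hhigh : Real.log (Stirling.stirlingSeq n) ≤ Real.log (Stirling.stirlingSeq 1) := by
    have := Stirling.log_stirlingSeq'_antitone (Nat.zero_le m)
    simpa [Function.comp, hndef, Nat.add_comm 1 m] using this
  rw [abs_le]
  constructor
  · have : -(|c| + |Real.log (Stirling.stirlingSeq 1)|) ≤ c := by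
      have := neg_abs_le c; have := abs_nonneg (Real.log (Stirling.stirlingSeq 1)); linarith
    nlinarith
  · have : Real.log (Stirling.stirlingSeq 1) ≤ |c| + |Real.log (Stirling.stirlingSeq 1)| := by
      have := le_abs_self (Real.log (Stirling.stirlingSeq 1)); have := abs_nonneg c; linarith
    nlinarith

/-- Stirling bound for the Gamma function on `[2, ∞)`. -/
lemma log_Gamma_bound : ∃ C : ℝ, ∀ x : ℝ, 2 ≤ x →
    |Real.log (Real.Gamma x) - gfun x| ≤ C + 3 * Real.log (2 * x) := by
  obtain ⟨C, hC0, hC⟩ := log_factorial_bound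
  refine ⟨C, fun x hx => ?_⟩
  set n : ℕ := ⌊x⌋₊ with hn
  have hx0 : (0:ℝ) < x := lt_of_lt_of_le two_pos hx
  have hn2 : 2 ≤ n := Nat.le_floor (by exact_mod_cast hx)
  have hnx : (n:ℝ) ≤ x := Nat.floor_le (le_of_lt hx0)
  have hxn1 : x < (n:ℝ) + 1 := Nat.lt_floor_add_one x
  have hn2R : (2:ℝ) ≤ (n:ℝ) := by exact_mod_cast hn2
  have hn1R : (1:ℝ) ≤ (n:ℝ) := by linarith
  have hmono := Real.Gamma_strictMonoOn_Ici.monotoneOn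
  -- Γ(n) ≤ Γ(x) ≤ Γ(n+1)
  have hGn : Real.Gamma (n:ℝ) = ((Nat.factorial (n-1) : ℕ) : ℝ) := by
    have h := Real.Gamma_nat_eq_factorial (n - 1)
    have h1 : (1:ℕ) ≤ n := by omega
    have hc : ((n - 1 : ℕ) : ℝ) + 1 = (n : ℝ) := by
      push_cast [Nat.cast_sub h1]; ring
    rw [hc] at h; exact h
  have hGn1 : Real.Gamma ((n:ℝ) + 1) = ((Nat.factorial n : ℕ) : ℝ) := by
    exact_mod_cast Real.Gamma_nat_eq_factorial n
  have hle1 : Real.Gamma (n:ℝ) ≤ Real.Gamma x :=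
    hmono (Set.mem_Ici.mpr hn2R) (Set.mem_Ici.mpr hx) hnx
  have hle2 : Real.Gamma x ≤ Real.Gamma ((n:ℝ) + 1) :=
    hmono (Set.mem_Ici.mpr hx) (Set.mem_Ici.mpr (by linarith)) (le_of_lt hxn1)
  have hGpos : 0 < Real.Gamma (n:ℝ) := by
    rw [hGn]
    exact_mod_cast Nat.cast_pos.mpr (Nat.factorial_pos (n-1))
  have hGxpos : 0 < Real.Gamma x := lt_of_lt_of_le hGpos hle1
  have hlogle1 : Real.log (Real.Gamma (n:ℝ)) ≤ Real.log (Real.Gamma x) :=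
    Real.log_le_log hGpos hle1
  have hlogle2 : Real.log (Real.Gamma x) ≤ Real.log (Real.Gamma ((n:ℝ) + 1)) :=
    Real.log_le_log hGxpos hle2
  have hfact1 := hC (n - 1) (by omega)
  have hfact2 := hC n (by omega)
  have hcast : ((n - 1 : ℕ) : ℝ) = (n:ℝ) - 1 := by
    have h1 : (1:ℕ) ≤ n := by omega
    push_cast [Nat.cast_sub h1]; ring
  rw [hcast] at hfact1
  have hlogx0 : 0 ≤ Real.log x := Real.log_nonneg (by linarith)
  have hlog2x : Real.log x ≤ Real.log (2 * x) :=
    Real.log_le_log hx0 (by linarith)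
  have hlog2x0 : 0 ≤ Real.log (2 * x) := le_trans hlogx0 hlog2x
  have hlog2n : Real.log (2 * (n:ℝ)) ≤ Real.log (2 * x) :=
    Real.log_le_log (by positivity) (by linarith)
  have hlog2nm1 : Real.log (2 * ((n:ℝ) - 1)) ≤ Real.log (2 * x) :=
    Real.log_le_log (by nlinarith) (by nlinarith)
  rw [abs_le]; constructor
  · -- lower bound
    have h1 : gfun ((n:ℝ) - 1) - (C + Real.log (2 * ((n:ℝ)-1))) ≤ Real.log ((Nat.factorial (n-1) : ℕ) : ℝ) := by
      have := abs_le.mp hfact1; push_cast at this ⊢; linarith [this.1]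
    have h2 : gfun x - gfun ((n:ℝ) - 1) ≤ (x - ((n:ℝ)-1)) * Real.log x :=
      gfun_gap_upper (by linarith) (by linarith)
    have h3 : (x - ((n:ℝ)-1)) * Real.log x ≤ 2 * Real.log x := by
      nlinarith
    have h4 : Real.log ((Nat.factorial (n-1) : ℕ) : ℝ) ≤ Real.log (Real.Gamma x) := by
      rw [← hGn]; exact hlogle1
    linarith
  · -- upper bound
    have h1 : Real.log ((Nat.factorial n : ℕ) : ℝ) ≤ gfun (n:ℝ) + (C + Real.log (2 * (n:ℝ))) := by
      have := abs_le.mp hfact2; push_cast at this ⊢; linarith [this.2]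
    have h2 : gfun (n:ℝ) ≤ gfun x := gfun_mono hn1R hnx
    have h4 : Real.log (Real.Gamma x) ≤ Real.log ((Nat.factorial n : ℕ) : ℝ) := by
      rw [← hGn1]; exact hlogle2
    linarith

/-- `(log Γ x - gfun x)/x → 0` as `x → ∞`. -/
lemma tendsto_log_Gamma_sub_gfun_div :
    Tendsto (fun x : ℝ => (Real.log (Real.Gamma x) - gfun x) / x) atTop (nhds 0) := by
  obtain ⟨C, hC⟩ := log_Gamma_bound
  have hbound : Tendsto (fun x : ℝ => (C + 3 * Real.log (2 * x)) / x) atTop (nhds 0) := by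
    have h1 : Tendsto (fun x : ℝ => C / x) atTop (nhds 0) :=
      tendsto_const_nhds.div_atTop tendsto_id
    have h2 : Tendsto (fun x : ℝ => Real.log x / x) atTop (nhds 0) :=
      Real.isLittleO_log_id_atTop.tendsto_div_nhds_zero
    have h3 : Tendsto (fun x : ℝ => 3 * (Real.log 2 / x + Real.log x / x)) atTop (nhds (3 * (0 + 0))) := by
      exact Tendsto.const_mul 3 ((tendsto_const_nhds.div_atTop tendsto_id).add h2)
    have h4 : Tendsto (fun x : ℝ => C / x + 3 * (Real.log 2 / x + Real.log x / x)) atTop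
        (nhds (0 + 3 * (0 + 0))) := h1.add h3
    simp only [add_zero, mul_zero, zero_add] at h4
    refine h4.congr' ?_
    filter_upwards [eventually_gt_atTop (0:ℝ)] with x hx
    rw [Real.log_mul two_ne_zero (ne_of_gt hx)]
    field_simp
  have hboundneg : Tendsto (fun x : ℝ => -((C + 3 * Real.log (2 * x)) / x)) atTop (nhds 0) := by
    simpa using hbound.neg
  refine tendsto_of_tendsto_of_tendsto_of_le_of_le' hboundneg hbound ?_ ?_
  · filter_upwards [eventually_ge_atTop (2:ℝ)] with x hx
    have h := abs_le.mp (hC x hx)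
    have hx0 : (0:ℝ) < x := by linarith
    have heq : -((C + 3 * Real.log (2 * x)) / x) = (-(C + 3 * Real.log (2 * x))) / x := by ring
    rw [heq]
    gcongr
    exact h.1
  · filter_upwards [eventually_ge_atTop (2:ℝ)] with x hx
    have h := abs_le.mp (hC x hx)
    have hx0 : (0:ℝ) < x := by linarith
    gcongr
    exact h.2

/-- Asymptotic growth rate of the Gamma-mixture supermartingale: if `N(t)/t → λ̄` and
`Λ₀(t)/t → λ̄₀`, then `(log M(t))/t → λ̄ log(λ̄/λ̄₀) − (λ̄ − λ̄₀)`, the KL divergence of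
`Poisson(λ̄)` from `Poisson(λ̄₀)`. -/
theorem log_M_growth_rate (φ lamBar lam0 : ℝ) (hφ : 0 < φ) (hlam : 0 < lamBar)
    (hlam0 : 0 < lam0) (N Λ₀ : ℝ → ℝ)
    (hN : ∀ t : ℝ, 0 < t → 0 ≤ N t) (hΛ₀ : ∀ t : ℝ, 0 < t → 0 ≤ Λ₀ t)
    (hNlim : Filter.Tendsto (fun t : ℝ => N t / t) Filter.atTop (nhds lamBar))
    (hΛlim : Filter.Tendsto (fun t : ℝ => Λ₀ t / t) Filter.atTop (nhds lam0)) :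
    Filter.Tendsto
      (fun t : ℝ =>
        (φ * Real.log φ - (φ + N t) * Real.log (φ + Λ₀ t) + Λ₀ t
            + Real.log (Real.Gamma (φ + N t)) - Real.log (Real.Gamma φ)) / t)
      Filter.atTop
      (nhds (lamBar * Real.log (lamBar / lam0) - (lamBar - lam0))) := by
  -- N t → ∞
  have hNtop : Tendsto N atTop atTop := by
    have h := Tendsto.pos_mul_atTop hlam hNlim tendsto_id
    refine h.congr' ?_
    filter_upwards [eventually_gt_atTop (0:ℝ)] with t ht
    field_simp
    rfl
  have hx_top : Tendsto (fun t => φ + N t) atTop atTop :=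
    tendsto_atTop_add_const_left _ φ hNtop
  have hE : Tendsto (fun t => (Real.log (Real.Gamma (φ + N t)) - gfun (φ + N t)) / (φ + N t))
      atTop (nhds 0) := tendsto_log_Gamma_sub_gfun_div.comp hx_top
  have hxdiv : Tendsto (fun t => (φ + N t) / t) atTop (nhds lamBar) := by
    have h : Tendsto (fun t : ℝ => φ / t + N t / t) atTop (nhds (0 + lamBar)) :=
      (tendsto_const_nhds.div_atTop tendsto_id).add hNlim
    rw [zero_add] at h
    refine h.congr' ?_
    filter_upwards [eventually_gt_atTop (0:ℝ)] with t ht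
    rw [add_div]
  have hydiv : Tendsto (fun t => (φ + Λ₀ t) / t) atTop (nhds lam0) := by
    have h : Tendsto (fun t : ℝ => φ / t + Λ₀ t / t) atTop (nhds (0 + lam0)) :=
      (tendsto_const_nhds.div_atTop tendsto_id).add hΛlim
    rw [zero_add] at h
    refine h.congr' ?_
    filter_upwards [eventually_gt_atTop (0:ℝ)] with t ht
    rw [add_div]
  have hlogq : Tendsto (fun t => Real.log (((φ + N t) / t) / ((φ + Λ₀ t) / t))) atTop
      (nhds (Real.log (lamBar / lam0))) := by
    have hq : Tendsto (fun t => ((φ + N t) / t) / ((φ + Λ₀ t) / t)) atTop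
        (nhds (lamBar / lam0)) := hxdiv.div hydiv (ne_of_gt hlam0)
    exact (Real.continuousAt_log (by positivity)).tendsto.comp hq
  have hA : Tendsto (fun t : ℝ => (φ * Real.log φ - Real.log (Real.Gamma φ)) / t) atTop
      (nhds 0) := tendsto_const_nhds.div_atTop tendsto_id
  have hB : Tendsto (fun t =>
      ((Real.log (Real.Gamma (φ + N t)) - gfun (φ + N t)) / (φ + N t)) * ((φ + N t) / t))
      atTop (nhds (0 * lamBar)) := hE.mul hxdiv
  have hCc : Tendsto (fun t =>
      ((φ + N t) / t) * Real.log (((φ + N t) / t) / ((φ + Λ₀ t) / t))) atTop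
      (nhds (lamBar * Real.log (lamBar / lam0))) := hxdiv.mul hlogq
  have hD : Tendsto (fun t => Λ₀ t / t - (φ + N t) / t) atTop (nhds (lam0 - lamBar)) :=
    hΛlim.sub hxdiv
  have hsum := ((hA.add hB).add hCc).add hD
  have hval : 0 + 0 * lamBar + lamBar * Real.log (lamBar / lam0) + (lam0 - lamBar)
      = lamBar * Real.log (lamBar / lam0) - (lamBar - lam0) := by ring
  rw [hval] at hsum
  refine hsum.congr' ?_
  filter_upwards [eventually_gt_atTop (0:ℝ)] with t ht
  have hxpos : 0 < φ + N t := by have := hN t ht; linarith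
  have hypos : 0 < φ + Λ₀ t := by have := hΛ₀ t ht; linarith
  have hqd : ((φ + N t) / t) / ((φ + Λ₀ t) / t) = (φ + N t) / (φ + Λ₀ t) := by
    field_simp
  rw [hqd, Real.log_div (ne_of_gt hxpos) (ne_of_gt hypos)]
  simp only [gfun]
  field_simp
  ring
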